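/- Let E and E₁ be finite-dimensional real inner product spaces, A : E → E₁ a surjective linear map with adjoint A*, f ∈ E₁, and J : E → [0, ∞) such that v ↦ J(v) + ω₀‖v‖² is convex for some ω₀ > 0. Define the subdifferential ∂J(v) := {ξ ∈ E : ξ + 2ω₀ v is a subgradient of the convex function w ↦ J(w) + ω₀‖w‖² at v}, and assume the growth condition: there exist K, L ≥ 0 such that ‖ξ‖ ≤ K J(v) + L for every v ∈ E and every ξ ∈ ∂J(v). Let ω > 0 and suppose the sequences (v_ℓ)_{ℓ≥0} in E and (q_ℓ)_{ℓ≥1} in E₁ satisfy: A*q_ℓ − 2ω(v_ℓ − v_{ℓ-1}) ∈ ∂J(v_ℓ) for all ℓ ≥ 1; A v_ℓ → f; v_ℓ − v_{ℓ-1} → 0; and (v_ℓ) is bounded. Then every cluster point v of (v_ℓ) satisfies Av = f and ∂J(v) ∩ ran(A*) ≠ ∅, i.e., v is a constrained critical point of J on the affine space {w ∈ E : Aw = f}. -/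

import Mathlib

open RealInnerProductSpace

/-- Main convergence theorem. For an `ω₀`-semi-convex `J ≥ 0` whose
subdifferential (defined via the convex function `w ↦ J(w) + ω₀‖w‖²`) satisfies the
growth condition `‖ξ‖ ≤ K J(v) + L`, if `A*q_ℓ − 2ω(v_ℓ − v_{ℓ−1}) ∈ ∂J(v_ℓ)`,
`A v_ℓ → f`, `v_ℓ − v_{ℓ−1} → 0` and `(v_ℓ)` is bounded, then every cluster point `x`
of `(v_ℓ)` satisfies `Ax = f` and `∂J(x) ∩ ran(A*) ≠ ∅`. -/
theorem statement6 {E E₁ : Type*}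
    [NormedAddCommGroup E] [InnerProductSpace ℝ E] [FiniteDimensional ℝ E]
    [NormedAddCommGroup E₁] [InnerProductSpace ℝ E₁] [FiniteDimensional ℝ E₁]
    (A : E →ₗ[ℝ] E₁) (hA : Function.Surjective A) (f : E₁)
    (J : E → ℝ) (hJ0 : ∀ v, 0 ≤ J v)
    (ω₀ ω : ℝ) (hω₀ : 0 < ω₀) (hω : 0 < ω)
    (hconv : ConvexOn ℝ Set.univ (fun v => J v + ω₀ * ‖v‖ ^ 2))
    (K L : ℝ) (hK : 0 ≤ K) (hL : 0 ≤ L)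
    (hgrowth : ∀ (x ξ : E),
      (∀ w, (J x + ω₀ * ‖x‖ ^ 2) + ⟪ξ + (2 * ω₀) • x, w - x⟫ ≤ J w + ω₀ * ‖w‖ ^ 2) →
      ‖ξ‖ ≤ K * J x + L)
    (v : ℕ → E) (q : ℕ → E₁)
    (hsub : ∀ ℓ : ℕ, ∀ w,
      (J (v (ℓ + 1)) + ω₀ * ‖v (ℓ + 1)‖ ^ 2) +
        ⟪((LinearMap.adjoint A) (q (ℓ + 1)) - (2 * ω) • (v (ℓ + 1) - v ℓ)) +
            (2 * ω₀) • v (ℓ + 1), w - v (ℓ + 1)⟫ ≤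
        J w + ω₀ * ‖w‖ ^ 2)
    (hAf : Filter.Tendsto (fun ℓ => A (v ℓ)) Filter.atTop (nhds f))
    (hdiff : Filter.Tendsto (fun ℓ => v (ℓ + 1) - v ℓ) Filter.atTop (nhds 0))
    (hbdd : Bornology.IsBounded (Set.range v)) :
    ∀ x : E, (∃ φ : ℕ → ℕ, StrictMono φ ∧
        Filter.Tendsto (fun n => v (φ n)) Filter.atTop (nhds x)) →
      A x = f ∧ ∃ ξ : E,
        (∀ w, (J x + ω₀ * ‖x‖ ^ 2) + ⟪ξ + (2 * ω₀) • x, w - x⟫ ≤ J w + ω₀ * ‖w‖ ^ 2) ∧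
        ξ ∈ LinearMap.range (LinearMap.adjoint A) := by
  intro x ⟨φ, hφ, hvx⟩
  set G : E → ℝ := fun v => J v + ω₀ * ‖v‖ ^ 2 with hG
  have hGcont : Continuous G := by
    have := hconv.continuousOn isOpen_univ
    rwa [← continuousOn_univ]
  -- v (φ n + 1) → x
  have hdiffφ : Filter.Tendsto (fun n => v (φ n + 1) - v (φ n)) Filter.atTop (nhds 0) :=
    hdiff.comp hφ.tendsto_atTop
  have hvx1 : Filter.Tendsto (fun n => v (φ n + 1)) Filter.atTop (nhds x) := by
    have : Filter.Tendsto (fun n => (v (φ n + 1) - v (φ n)) + v (φ n)) Filter.atTop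
        (nhds (0 + x)) := hdiffφ.add hvx
    simpa using this
  have hAcont : Continuous A := A.continuous_of_finiteDimensional
  have hAx : A x = f := by
    have h1 : Filter.Tendsto (fun n => A (v (φ n))) Filter.atTop (nhds (A x)) :=
      (hAcont.tendsto x).comp hvx
    have h2 : Filter.Tendsto (fun n => A (v (φ n))) Filter.atTop (nhds f) :=
      hAf.comp hφ.tendsto_atTop
    exact tendsto_nhds_unique h1 h2
  refine ⟨hAx, ?_⟩
  -- bound on ‖v ℓ‖
  obtain ⟨M, hM⟩ := hbdd.exists_norm_le
  have hMv : ∀ ℓ, ‖v ℓ‖ ≤ M := fun ℓ => hM _ (Set.mem_range_self ℓ)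
  have hM0 : 0 ≤ M := le_trans (norm_nonneg _) (hMv 0)
  -- bound on G on the closed ball
  have hcomp : IsCompact (Metric.closedBall (0 : E) M) := isCompact_closedBall 0 M
  obtain ⟨z, -, hz⟩ := hcomp.exists_isMaxOn ⟨0, by simp [hM0]⟩ hGcont.continuousOn
  set C := G z with hC
  have hJb : ∀ ℓ, J (v ℓ) ≤ C := by
    intro ℓ
    have h1 : G (v ℓ) ≤ C := hz (by simpa [Metric.mem_closedBall, dist_eq_norm] using hMv ℓ)
    have h2 : G (v ℓ) = J (v ℓ) + ω₀ * ‖v ℓ‖ ^ 2 := rfl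
    nlinarith [sq_nonneg ‖v ℓ‖, hω₀.le]
  -- the subgradients
  set ξs : ℕ → E := fun ℓ =>
    (LinearMap.adjoint A) (q (ℓ + 1)) - (2 * ω) • (v (ℓ + 1) - v ℓ) with hξs
  have hξb : ∀ ℓ, ‖ξs ℓ‖ ≤ K * C + L := by
    intro ℓ
    have h1 : ‖ξs ℓ‖ ≤ K * J (v (ℓ + 1)) + L := hgrowth _ _ (hsub ℓ)
    have := hJb (ℓ + 1)
    nlinarith
  -- extract convergent subsequence of ξs ∘ φ
  have hcomp2 : IsCompact (Metric.closedBall (0 : E) (K * C + L)) :=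
    isCompact_closedBall _ _
  obtain ⟨ξ, -, ψ, hψ, hξt⟩ := hcomp2.tendsto_subseq
    (x := fun n => ξs (φ n))
    (fun n => by simpa [Metric.mem_closedBall, dist_eq_norm] using hξb (φ n))
  -- ξ ∈ range A*
  have hmem : ξ ∈ LinearMap.range (LinearMap.adjoint A) := by
    have hclosed : IsClosed (LinearMap.range (LinearMap.adjoint A) : Set E) :=
      Submodule.closed_of_finiteDimensional _
    have hdψ : Filter.Tendsto (fun n => v (φ (ψ n) + 1) - v (φ (ψ n)))
        Filter.atTop (nhds 0) := hdiffφ.comp hψ.tendsto_atTop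
    have htq : Filter.Tendsto
        (fun n => (LinearMap.adjoint A) (q (φ (ψ n) + 1))) Filter.atTop (nhds ξ) := by
      have : Filter.Tendsto
          (fun n => ξs (φ (ψ n)) + (2 * ω) • (v (φ (ψ n) + 1) - v (φ (ψ n))))
          Filter.atTop (nhds (ξ + (2 * ω) • (0 : E))) :=
        hξt.add (hdψ.const_smul _)
      simpa [ξs, sub_add_cancel] using this
    exact hclosed.mem_of_tendsto htq
      (Filter.Eventually.of_forall fun n => LinearMap.mem_range_self _ _)
  refine ⟨ξ, ?_, hmem⟩
  intro w
  have hvψ : Filter.Tendsto (fun n => v (φ (ψ n) + 1)) Filter.atTop (nhds x) :=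
    hvx1.comp hψ.tendsto_atTop
  have hlhs : Filter.Tendsto
      (fun n => G (v (φ (ψ n) + 1)) +
        ⟪ξs (φ (ψ n)) + (2 * ω₀) • v (φ (ψ n) + 1), w - v (φ (ψ n) + 1)⟫)
      Filter.atTop (nhds (G x + ⟪ξ + (2 * ω₀) • x, w - x⟫)) := by
    have h1 : Filter.Tendsto (fun n => G (v (φ (ψ n) + 1))) Filter.atTop (nhds (G x)) :=
      (hGcont.tendsto x).comp hvψ
    have h2 : Filter.Tendsto
        (fun n => ξs (φ (ψ n)) + (2 * ω₀) • v (φ (ψ n) + 1)) Filter.atTop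
        (nhds (ξ + (2 * ω₀) • x)) := hξt.add (hvψ.const_smul _)
    have h3 : Filter.Tendsto (fun n => w - v (φ (ψ n) + 1)) Filter.atTop
        (nhds (w - x)) := tendsto_const_nhds.sub hvψ
    exact h1.add ((Continuous.inner continuous_fst continuous_snd).tendsto
      (ξ + (2 * ω₀) • x, w - x) |>.comp (h2.prodMk_nhds h3))
  refine le_of_tendsto hlhs (Filter.Eventually.of_forall fun n => ?_)
  exact hsub (φ (ψ n)) w
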